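/- Let π be a probability measure on ℝ that is symmetric about 0 (the pushforward of π under θ ↦ −θ equals π) with finite variance v² = ∫ θ² dπ(θ). Let σ > 0 and s ∈ ℝ, and define the posterior mean m(s) = ( ∫ θ·exp(−(s − θ)²/(2σ²)) dπ(θ) ) / ( ∫ exp(−(s − θ)²/(2σ²)) dπ(θ) ). Then |m(s)| ≤ max{v, 2|s|} and |m(s)| ≤ v·exp(s²/(4σ²)). That is, the output of a Bayesian AI whose prior has small variance stays uniformly close to 0 no matter how informative a signal the user sends, except for very large signal realizations. -/

import Mathlib

open MeasureTheory Real

noncomputable def rhoAux (z t : ℝ) : ℝ := Real.exp (-t^2/2) * Real.cosh (z*t)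

lemma rhoAux_pos (z t : ℝ) : 0 < rhoAux z t :=
  mul_pos (Real.exp_pos _) (Real.cosh_pos _)

lemma rhoAux_zero (z : ℝ) : rhoAux z 0 = 1 := by
  simp [rhoAux]

lemma hasDerivAt_tcosh (x : ℝ) : HasDerivAt (fun t : ℝ => t * Real.cosh t - Real.sinh t)
    (x * Real.sinh x) x := by
  have h1 := ((hasDerivAt_id x).mul (Real.hasDerivAt_cosh x)).sub (Real.hasDerivAt_sinh x)
  refine h1.congr_deriv ?_
  simp [id]

-- (P2) sinh t ≤ t cosh t for t ≥ 0
lemma sinh_le_mul_cosh {t : ℝ} (ht : 0 ≤ t) : Real.sinh t ≤ t * Real.cosh t := by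
  have key : MonotoneOn (fun t => t * Real.cosh t - Real.sinh t) (Set.Ici 0) := by
    apply monotoneOn_of_deriv_nonneg (convex_Ici 0)
    · exact ((continuous_id.mul Real.continuous_cosh).sub Real.continuous_sinh).continuousOn
    · intro x _
      exact (hasDerivAt_tcosh x).differentiableAt.differentiableWithinAt
    · intro x hx
      rw [interior_Ici, Set.mem_Ioi] at hx
      rw [(hasDerivAt_tcosh x).deriv]
      have h2 : 0 < Real.sinh x := by rwa [Real.sinh_pos_iff]
      positivity
  have h0 := key (Set.self_mem_Ici) (Set.mem_Ici.2 ht) ht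
  simp only [Real.cosh_zero, Real.sinh_zero, mul_zero, zero_mul, sub_zero, zero_sub] at h0
  linarith

-- (P3) scaling: for 0 ≤ p ≤ q : q * sinh p ≤ p * sinh q
lemma sinh_scale {p q : ℝ} (hp : 0 ≤ p) (hpq : p ≤ q) : q * Real.sinh p ≤ p * Real.sinh q := by
  have hq : 0 ≤ q := hp.trans hpq
  have h1 : Real.sinh q = Real.sinh p * Real.cosh (q - p) + Real.cosh p * Real.sinh (q - p) := by
    rw [← Real.sinh_add]; ring_nf
  have h2 : q - p ≤ Real.sinh (q - p) := by
    rw [Real.self_le_sinh_iff]; linarith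
  have h3 : (1:ℝ) ≤ Real.cosh (q - p) := Real.one_le_cosh _
  have h4 : 0 ≤ Real.sinh p := by rwa [Real.sinh_nonneg_iff]
  have h5 : Real.sinh p ≤ p * Real.cosh p := sinh_le_mul_cosh hp
  have h6 : 0 < Real.cosh p := Real.cosh_pos p
  -- p * sinh q ≥ p*sinh p + p*cosh p*(q-p) ≥ p sinh p + (q-p) sinh p = q sinh p
  have e1 : p * Real.cosh p * (q-p) ≤ p * Real.cosh p * Real.sinh (q-p) :=
    mul_le_mul_of_nonneg_left h2 (mul_nonneg hp h6.le)
  have e2 : (q-p) * Real.sinh p ≤ (q-p) * (p * Real.cosh p) :=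
    mul_le_mul_of_nonneg_left h5 (by linarith)
  have e3 : p * Real.sinh p * 1 ≤ p * Real.sinh p * Real.cosh (q-p) :=
    mul_le_mul_of_nonneg_left h3 (mul_nonneg hp h4)
  nlinarith [e1, e2, e3]

-- tanh scaling: for 0 ≤ p ≤ q : p * (sinh q * cosh p) ≤ q * (sinh p * cosh q)
lemma tanh_scale {p q : ℝ} (hp : 0 ≤ p) (hpq : p ≤ q) :
    p * (Real.sinh q * Real.cosh p) ≤ q * (Real.sinh p * Real.cosh q) := by
  have h1 := sinh_scale (by linarith : (0:ℝ) ≤ q - p) (by linarith : q - p ≤ q + p)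
  -- (q+p) * sinh (q-p) ≤ (q-p) * sinh (q+p)
  have e1 : Real.sinh q * Real.cosh p = (Real.sinh (q+p) + Real.sinh (q-p))/2 := by
    rw [Real.sinh_add, Real.sinh_sub]; ring
  have e2 : Real.sinh p * Real.cosh q = (Real.sinh (q+p) - Real.sinh (q-p))/2 := by
    rw [Real.sinh_add, Real.sinh_sub]; ring
  rw [e1, e2]
  nlinarith [h1]

-- Claim A (weak): phi(t0) ≤ 0 propagates to t ≥ t0 (t0 > 0)
lemma phi_propagate {z t₀ t : ℝ} (hz : 0 ≤ z) (ht₀ : 0 < t₀) (ht : t₀ ≤ t)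
    (h : z * Real.sinh (z*t₀) ≤ t₀ * Real.cosh (z*t₀)) :
    z * Real.sinh (z*t) ≤ t * Real.cosh (z*t) := by
  have hzt : z*t₀ ≤ z*t := mul_le_mul_of_nonneg_left ht hz
  have hts := tanh_scale (mul_nonneg hz ht₀.le) hzt
  -- (z t₀) (sinh(z t) cosh(z t₀)) ≤ (z t) (sinh (z t₀) cosh (z t))
  have hcosh₀ : 0 < Real.cosh (z*t₀) := Real.cosh_pos _
  have hcosh : 0 < Real.cosh (z*t) := Real.cosh_pos _
  rcases eq_or_lt_of_le hz with hz0 | hzpos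
  · simp [← hz0]
    linarith
  -- multiply h by t * cosh(z t) ≥ 0:
  have e2 : (t * Real.cosh (z*t)) * (z * Real.sinh (z*t₀)) ≤
      (t * Real.cosh (z*t)) * (t₀ * Real.cosh (z*t₀)) :=
    mul_le_mul_of_nonneg_left h (mul_nonneg (by linarith) hcosh.le)
  -- combine: t₀ cosh(zt₀) * (z sinh(zt)) ≤ t cosh(zt) t₀ cosh(zt₀)
  have e3 : (t₀ * Real.cosh (z*t₀)) * (z * Real.sinh (z*t)) ≤
      (t₀ * Real.cosh (z*t₀)) * (t * Real.cosh (z*t)) := by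
    nlinarith [hts, e2]
  have hp : 0 < t₀ * Real.cosh (z*t₀) := by positivity
  exact le_of_mul_le_mul_left (by linarith [e3]) hp

-- strict version
lemma phi_propagate_lt {z t₀ t : ℝ} (hz : 0 ≤ z) (ht₀ : 0 < t₀) (ht : t₀ ≤ t)
    (h : z * Real.sinh (z*t₀) < t₀ * Real.cosh (z*t₀)) :
    z * Real.sinh (z*t) < t * Real.cosh (z*t) := by
  have hzt : z*t₀ ≤ z*t := mul_le_mul_of_nonneg_left ht hz
  have hts := tanh_scale (mul_nonneg hz ht₀.le) hzt
  have hcosh₀ : 0 < Real.cosh (z*t₀) := Real.cosh_pos _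
  have hcosh : 0 < Real.cosh (z*t) := Real.cosh_pos _
  have htpos : 0 < t := ht₀.trans_le ht
  rcases eq_or_lt_of_le hz with hz0 | hzpos
  · simp [← hz0]
    linarith
  have e2 : (t * Real.cosh (z*t)) * (z * Real.sinh (z*t₀)) <
      (t * Real.cosh (z*t)) * (t₀ * Real.cosh (z*t₀)) :=
    mul_lt_mul_of_pos_left h (by positivity)
  have e3 : (t₀ * Real.cosh (z*t₀)) * (z * Real.sinh (z*t)) <
      (t₀ * Real.cosh (z*t₀)) * (t * Real.cosh (z*t)) := by
    nlinarith [hts, e2]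
  have hp : 0 < t₀ * Real.cosh (z*t₀) := by positivity
  exact lt_of_mul_lt_mul_left (by linarith [e3]) hp.le

-- derivative of rho
lemma hasDerivAt_rhoAux (z t : ℝ) : HasDerivAt (rhoAux z)
    (Real.exp (-t^2/2) * (z * Real.sinh (z*t) - t * Real.cosh (z*t))) t := by
  have h1 : HasDerivAt (fun t : ℝ => -t^2/2) (-t) t := by
    have := ((hasDerivAt_pow 2 t).neg).div_const 2
    refine this.congr_deriv ?_
    simp
    ring
  have h2 : HasDerivAt (fun t : ℝ => Real.exp (-t^2/2)) (Real.exp (-t^2/2) * (-t)) t :=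
    (Real.hasDerivAt_exp _).comp t h1
  have h3 : HasDerivAt (fun t : ℝ => Real.cosh (z*t)) (Real.sinh (z*t) * z) t := by
    exact (Real.hasDerivAt_cosh (z*t)).comp t (by simpa using (hasDerivAt_id t).const_mul z)
  have := h2.mul h3
  refine this.congr_deriv ?_
  ring

lemma continuous_rhoAux (z : ℝ) : Continuous (rhoAux z) := by
  unfold rhoAux
  exact (Real.continuous_exp.comp (by fun_prop)).mul (Real.continuous_cosh.comp (by fun_prop))

lemma rhoAux_monoOn {z a b : ℝ}
    (h : ∀ x, a < x → x < b → x * Real.cosh (z*x) ≤ z * Real.sinh (z*x)) :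
    MonotoneOn (rhoAux z) (Set.Icc a b) := by
  apply monotoneOn_of_deriv_nonneg (convex_Icc a b) (continuous_rhoAux z).continuousOn
  · intro x _
    exact (hasDerivAt_rhoAux z x).differentiableAt.differentiableWithinAt
  · intro x hx
    rw [interior_Icc, Set.mem_Ioo] at hx
    rw [(hasDerivAt_rhoAux z x).deriv]
    have := h x hx.1 hx.2
    have he := Real.exp_pos (-x^2/2)
    nlinarith
lemma rhoAux_antiOn {z a b : ℝ}
    (h : ∀ x, a < x → x < b → z * Real.sinh (z*x) ≤ x * Real.cosh (z*x)) :
    AntitoneOn (rhoAux z) (Set.Icc a b) := by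
  apply antitoneOn_of_deriv_nonpos (convex_Icc a b) (continuous_rhoAux z).continuousOn
  · intro x _
    exact (hasDerivAt_rhoAux z x).differentiableAt.differentiableWithinAt
  · intro x hx
    rw [interior_Icc, Set.mem_Ioo] at hx
    rw [(hasDerivAt_rhoAux z x).deriv]
    have := h x hx.1 hx.2
    have he := Real.exp_pos (-x^2/2)
    nlinarith

-- (P1)
lemma rhoAux_le (z t : ℝ) : rhoAux z t ≤ Real.exp (z^2/2) := by
  unfold rhoAux
  have h1 : Real.cosh (z*t) ≤ Real.exp |z*t| := by
    rw [Real.cosh_eq]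
    have a1 : Real.exp (z*t) ≤ Real.exp |z*t| := Real.exp_le_exp.2 (le_abs_self _)
    have a2 : Real.exp (-(z*t)) ≤ Real.exp |z*t| := Real.exp_le_exp.2 (neg_le_abs _)
    linarith
  have h2 : Real.exp (-t^2/2) * Real.cosh (z*t) ≤ Real.exp (-t^2/2) * Real.exp |z*t| :=
    mul_le_mul_of_nonneg_left h1 (Real.exp_pos _).le
  rw [← Real.exp_add] at h2
  apply h2.trans
  apply Real.exp_le_exp.2
  have : |z*t| ≤ z^2/2 + t^2/2 := by
    rw [abs_mul]
    nlinarith [sq_nonneg (|z| - |t|), sq_abs z, sq_abs t, abs_nonneg z, abs_nonneg t]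
  linarith

-- (P6)
lemma rhoAux_anti_of_lt_one {z u t : ℝ} (hz : 0 ≤ z) (hu : 0 ≤ u) (hut : u ≤ t)
    (h1 : rhoAux z u < 1) : rhoAux z t ≤ rhoAux z u := by
  have hu0 : 0 < u := by
    rcases eq_or_lt_of_le hu with h | h
    · exfalso; rw [← h, rhoAux_zero] at h1; exact lt_irrefl _ h1
    · exact h
  have hφu : z * Real.sinh (z*u) ≤ u * Real.cosh (z*u) := by
    by_contra hlt
    push_neg at hlt
    have hmono : MonotoneOn (rhoAux z) (Set.Icc 0 u) := by
      apply rhoAux_monoOn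
      intro x hx0 hxu
      by_contra hx
      push_neg at hx
      exact absurd (phi_propagate_lt hz hx0 hxu.le hx) (not_lt.2 hlt.le)
    have := hmono (Set.mem_Icc.2 ⟨le_refl 0, hu⟩) (Set.mem_Icc.2 ⟨hu, le_refl u⟩) hu
    rw [rhoAux_zero] at this
    linarith
  have hanti : AntitoneOn (rhoAux z) (Set.Icc u t) := by
    apply rhoAux_antiOn
    intro x hxu hxt
    exact phi_propagate hz hu0 hxu.le hφu
  exact hanti (Set.mem_Icc.2 ⟨le_refl u, hut⟩) (Set.mem_Icc.2 ⟨hut, le_refl t⟩) hut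

-- (P5)
lemma rhoAux_ge_min {z u t : ℝ} (hz : 0 ≤ z) (ht : 0 ≤ t) (htu : t ≤ u) :
    min 1 (rhoAux z u) ≤ rhoAux z t := by
  rcases le_or_gt (t * Real.cosh (z*t)) (z * Real.sinh (z*t)) with hφ | hφ
  · -- increasing on [0,t]: rho t ≥ 1
    have hmono : MonotoneOn (rhoAux z) (Set.Icc 0 t) := by
      apply rhoAux_monoOn
      intro x hx0 hxt
      by_contra hx
      push_neg at hx
      have := phi_propagate_lt hz hx0 hxt.le hx
      linarith
    have h1 := hmono (Set.mem_Icc.2 ⟨le_refl 0, ht⟩) (Set.mem_Icc.2 ⟨ht, le_refl t⟩) ht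
    rw [rhoAux_zero] at h1
    exact le_trans (min_le_left _ _) h1
  · -- t past the peak: rho decreasing on [t,u]
    have ht0 : 0 < t := by
      rcases eq_or_lt_of_le ht with h | h
      · exfalso
        rw [← h] at hφ
        simp at hφ
      · exact h
    have hanti : AntitoneOn (rhoAux z) (Set.Icc t u) := by
      apply rhoAux_antiOn
      intro x hxt hxu
      exact phi_propagate hz ht0 hxt.le hφ.le
    have := hanti (Set.mem_Icc.2 ⟨le_refl t, htu⟩) (Set.mem_Icc.2 ⟨htu, le_refl u⟩) htu
    exact le_trans (min_le_right _ _) this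

lemma rhoAux_abs (z t : ℝ) (hz : 0 ≤ z) : rhoAux z |t| = rhoAux z t := by
  unfold rhoAux
  rw [sq_abs]
  congr 1
  rw [← Real.cosh_abs (z*t), abs_mul, abs_of_nonneg hz]

-- key lemma for bound 2
lemma keyF {z u : ℝ} (hz : 0 ≤ z) (hu : 0 ≤ u) (t : ℝ) :
    (t^2 - Real.exp (z^2/2) * u^2) * rhoAux z t ≤
      Real.exp (z^2/2) * min 1 (rhoAux z u) * (t^2 - u^2) := by
  wlog ht : 0 ≤ t generalizing t
  · have := this |t| (abs_nonneg t)
    rwa [rhoAux_abs z t hz, sq_abs] at this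
  set E := Real.exp (z^2/2) with hE
  have hE1 : 1 ≤ E := by
    rw [hE]
    calc (1:ℝ) = Real.exp 0 := by simp
    _ ≤ Real.exp (z^2/2) := Real.exp_le_exp.2 (by positivity)
  set r := min 1 (rhoAux z u) with hr
  have hr0 : 0 < r := lt_min one_pos (rhoAux_pos z u)
  have hr1 : r ≤ 1 := min_le_left _ _
  have hru : r ≤ rhoAux z u := min_le_right _ _
  have hρt : 0 < rhoAux z t := rhoAux_pos z t
  rcases le_or_gt t u with htu | hut
  · -- t ≤ u
    have h5 : r ≤ rhoAux z t := rhoAux_ge_min hz ht htu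
    have ht2u2 : t^2 ≤ u^2 := by nlinarith
    -- goal ⟺ t²ρt − E r t² ≤ E u² ρt − E r u²
    have c1 : t^2 * (rhoAux z t - r) ≤ E * (u^2 * (rhoAux z t - r)) := by
      have b1 : t^2 * (rhoAux z t - r) ≤ u^2 * (rhoAux z t - r) :=
        mul_le_mul_of_nonneg_right ht2u2 (by linarith)
      have b2 : u^2 * (rhoAux z t - r) ≤ E * (u^2 * (rhoAux z t - r)) := by
        nlinarith [mul_nonneg (sq_nonneg u) (by linarith : (0:ℝ) ≤ rhoAux z t - r)]
      linarith
    have c2 : t^2 * r ≤ t^2 * (E * r) := by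
      nlinarith [mul_nonneg (mul_nonneg (sq_nonneg t) hr0.le) (sub_nonneg.2 hE1)]
    nlinarith [c1, c2]
  · -- u < t
    rcases le_or_gt (t^2) (E * u^2) with hsmall | hbig
    · have l1 : (t^2 - E*u^2) * rhoAux z t ≤ 0 :=
        mul_nonpos_of_nonpos_of_nonneg (by linarith) hρt.le
      have l2 : 0 ≤ E * r * (t^2 - u^2) := by
        apply mul_nonneg (by positivity)
        nlinarith
      linarith
    · rcases le_or_gt 1 (rhoAux z u) with hρu1 | hρu1
      · have hre : r = 1 := min_eq_left hρu1
        rw [hre]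
        have l1 : (t^2 - E*u^2) * rhoAux z t ≤ (t^2 - E*u^2) * E :=
          mul_le_mul_of_nonneg_left (rhoAux_le z t) (by linarith)
        have l2 : (t^2 - E*u^2) ≤ (t^2 - u^2) := by nlinarith [sq_nonneg u]
        have l3 : (t^2 - E*u^2) * E ≤ (t^2 - u^2) * E :=
          mul_le_mul_of_nonneg_right l2 (by linarith)
        calc (t^2 - E*u^2) * rhoAux z t ≤ (t^2 - u^2) * E := by linarith
        _ = E * 1 * (t^2-u^2) := by ring
      · have hre : r = rhoAux z u := min_eq_right hρu1.le
        have hanti : rhoAux z t ≤ rhoAux z u := rhoAux_anti_of_lt_one hz hu hut.le hρu1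
        have hu2t2 : u^2 ≤ t^2 := by nlinarith
        have l1 : (t^2 - E*u^2) * rhoAux z t ≤ (t^2 - u^2) * rhoAux z t := by
          apply mul_le_mul_of_nonneg_right _ hρt.le
          nlinarith [sq_nonneg u]
        have l2 : (t^2 - u^2) * rhoAux z t ≤ (t^2 - u^2) * rhoAux z u :=
          mul_le_mul_of_nonneg_left hanti (by linarith)
        have l3 : (t^2 - u^2) * rhoAux z u ≤ E * ((t^2 - u^2) * rhoAux z u) := by
          nlinarith [mul_nonneg (by linarith : (0:ℝ) ≤ t^2 - u^2) (rhoAux_pos z u).le]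
        rw [hre]
        calc (t^2 - E*u^2) * rhoAux z t ≤ E * ((t^2-u^2) * rhoAux z u) := by linarith
        _ = E * rhoAux z u * (t^2 - u^2) := by ring

-- representation of rho as sum of two gaussians
lemma rhoAux_eq (z t : ℝ) : rhoAux z t =
    (Real.exp (-(t^2 - 2*z*t)/2) + Real.exp (-(t^2 + 2*z*t)/2))/2 := by
  unfold rhoAux
  rw [Real.cosh_eq]
  have h1 : Real.exp (-t^2/2) * Real.exp (z*t) = Real.exp (-(t^2-2*z*t)/2) := by
    rw [← Real.exp_add]; congr 1; ring
  have h2 : Real.exp (-t^2/2) * Real.exp (-(z*t)) = Real.exp (-(t^2+2*z*t)/2) := by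
    rw [← Real.exp_add]; congr 1; ring
  calc Real.exp (-t^2/2) * ((Real.exp (z*t) + Real.exp (-(z*t)))/2)
      = (Real.exp (-t^2/2) * Real.exp (z*t) + Real.exp (-t^2/2) * Real.exp (-(z*t)))/2 := by ring
  _ = (Real.exp (-(t^2 - 2*z*t)/2) + Real.exp (-(t^2 + 2*z*t)/2))/2 := by rw [h1, h2]

-- key lemma for bound 1 (threshold)
lemma keyT {z T u : ℝ} (hz : 0 ≤ z) (hT : 2*z ≤ T) (hu0 : 0 ≤ u) (huT : u ≤ T) (t : ℝ) :
    (t^2 - T^2) * rhoAux z t ≤ rhoAux z T * (t^2 - u^2) := by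
  wlog ht : 0 ≤ t generalizing t
  · have := this |t| (abs_nonneg t)
    rwa [rhoAux_abs z t hz, sq_abs] at this
  have hT0 : 0 ≤ T := le_trans (by linarith) hT
  have key : (t^2 - T^2) * rhoAux z t ≤ (t^2 - T^2) * rhoAux z T := by
    rcases le_or_gt t T with htT | hTt
    · -- t ≤ T: rho t ≥ rho T, and t²−T² ≤ 0
      have hρ : rhoAux z T ≤ rhoAux z t := by
        rw [rhoAux_eq, rhoAux_eq]
        have e1 : Real.exp (-(T^2 - 2*z*T)/2) ≤ Real.exp (-(t^2 - 2*z*t)/2) := by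
          apply Real.exp_le_exp.2
          nlinarith [mul_nonneg (sub_nonneg.2 htT) (by linarith : (0:ℝ) ≤ t + T - 2*z)]
        have e2 : Real.exp (-(T^2 + 2*z*T)/2) ≤ Real.exp (-(t^2 + 2*z*t)/2) := by
          apply Real.exp_le_exp.2
          nlinarith [mul_nonneg (sub_nonneg.2 htT) (by linarith : (0:ℝ) ≤ t + T + 2*z)]
        linarith
      have hsign : t^2 - T^2 ≤ 0 := by nlinarith
      nlinarith [hρ, hsign]
    · have hρ : rhoAux z t ≤ rhoAux z T := by
        rw [rhoAux_eq, rhoAux_eq]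
        have e1 : Real.exp (-(t^2 - 2*z*t)/2) ≤ Real.exp (-(T^2 - 2*z*T)/2) := by
          apply Real.exp_le_exp.2
          nlinarith [mul_nonneg (sub_nonneg.2 hTt.le) (by linarith : (0:ℝ) ≤ t + T - 2*z)]
        have e2 : Real.exp (-(t^2 + 2*z*t)/2) ≤ Real.exp (-(T^2 + 2*z*T)/2) := by
          apply Real.exp_le_exp.2
          nlinarith [mul_nonneg (sub_nonneg.2 hTt.le) (by linarith : (0:ℝ) ≤ t + T + 2*z)]
        linarith
      have hsign : 0 ≤ t^2 - T^2 := by nlinarith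
      nlinarith [hρ, hsign]
  apply key.trans
  have h2 : (t^2 - T^2) ≤ (t^2 - u^2) := by nlinarith
  have := rhoAux_pos z T
  nlinarith [mul_le_mul_of_nonneg_left h2 (rhoAux_pos z T).le]

-- sigma-scaled versions
lemma keyFσ {σ s v : ℝ} (hσ : 0 < σ) (hv : 0 ≤ v) (θ : ℝ) :
    (θ^2 - Real.exp (s^2/(2*σ^2))*v^2) * rhoAux (|s|/σ) (θ/σ) ≤
      Real.exp (s^2/(2*σ^2)) * min 1 (rhoAux (|s|/σ) (v/σ)) * (θ^2 - v^2) := by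
  have hz : 0 ≤ |s|/σ := by positivity
  have hu : 0 ≤ v/σ := by positivity
  have hk := keyF hz hu (θ/σ)
  have hz2 : (|s|/σ)^2/2 = s^2/(2*σ^2) := by rw [div_pow, sq_abs]; ring
  rw [hz2] at hk
  have hσ0 : σ ≠ 0 := ne_of_gt hσ
  set E := Real.exp (s^2/(2*σ^2))
  set R := rhoAux (|s|/σ) (θ/σ)
  set r := min 1 (rhoAux (|s|/σ) (v/σ))
  have id1 : (θ^2 - E*v^2) * R = σ^2 * (((θ/σ)^2 - E*(v/σ)^2) * R) := by
    field_simp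
    try ring
  have id2 : E * r * (θ^2 - v^2) = σ^2 * (E * r * ((θ/σ)^2 - (v/σ)^2)) := by
    field_simp
    try ring
  rw [id1, id2]
  exact mul_le_mul_of_nonneg_left hk (by positivity)

lemma keyTσ {σ s v K : ℝ} (hσ : 0 < σ) (hv : 0 ≤ v) (hK2 : 2*|s| ≤ K) (hKv : v ≤ K) (θ : ℝ) :
    (θ^2 - K^2) * rhoAux (|s|/σ) (θ/σ) ≤ rhoAux (|s|/σ) (K/σ) * (θ^2 - v^2) := by
  have hz : 0 ≤ |s|/σ := by positivity
  have h1 : 2*(|s|/σ) ≤ K/σ := by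
    rw [← mul_div_assoc]
    gcongr
  have h2 : v/σ ≤ K/σ := by gcongr
  have hk := keyT hz h1 (by positivity : 0 ≤ v/σ) h2 (θ/σ)
  have hσ0 : σ ≠ 0 := ne_of_gt hσ
  set R := rhoAux (|s|/σ) (θ/σ)
  set RK := rhoAux (|s|/σ) (K/σ)
  have id1 : (θ^2 - K^2) * R = σ^2 * (((θ/σ)^2 - (K/σ)^2) * R) := by
    field_simp
    try ring
  have id2 : RK * (θ^2 - v^2) = σ^2 * (RK * ((θ/σ)^2 - (v/σ)^2)) := by
    field_simp
    try ring
  rw [id1, id2]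
  exact mul_le_mul_of_nonneg_left hk (by positivity)

/-- Bounds on the posterior mean under a symmetric prior with small variance:
if `P` is a probability measure on `ℝ` symmetric about `0` with variance
`v² = ∫ θ² dP`, and `m(s)` is the posterior mean after a Gaussian signal with
noise standard deviation `σ`, then `|m(s)| ≤ max(v, 2|s|)` and
`|m(s)| ≤ v·exp(s²/(4σ²))`. -/
theorem posterior_mean_bounds (P : Measure ℝ) [IsProbabilityMeasure P]
    (hsym : Measure.map (fun θ => -θ) P = P)
    (v : ℝ) (hv0 : 0 ≤ v)
    (hint : Integrable (fun θ => θ ^ 2) P)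
    (hvar : ∫ θ, θ ^ 2 ∂P = v ^ 2)
    (σ s : ℝ) (hσ : 0 < σ) :
    |(∫ θ, θ * Real.exp (-(s - θ) ^ 2 / (2 * σ ^ 2)) ∂P) /
        (∫ θ, Real.exp (-(s - θ) ^ 2 / (2 * σ ^ 2)) ∂P)| ≤ max v (2 * |s|) ∧
    |(∫ θ, θ * Real.exp (-(s - θ) ^ 2 / (2 * σ ^ 2)) ∂P) /
        (∫ θ, Real.exp (-(s - θ) ^ 2 / (2 * σ ^ 2)) ∂P)| ≤ v * Real.exp (s ^ 2 / (4 * σ ^ 2)) := by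
  have hσ0 : σ ≠ 0 := ne_of_gt hσ
  set w : ℝ → ℝ := fun θ => Real.exp (-(s - θ) ^ 2 / (2 * σ ^ 2)) with hw
  have hwc : Continuous w := by
    apply Real.continuous_exp.comp
    fun_prop
  have hwpos : ∀ θ, 0 < w θ := fun θ => Real.exp_pos _
  have hwle : ∀ θ, w θ ≤ 1 := by
    intro θ
    rw [hw]
    calc Real.exp (-(s - θ) ^ 2 / (2 * σ ^ 2)) ≤ Real.exp 0 := by
          apply Real.exp_le_exp.2
          apply div_nonpos_of_nonpos_of_nonneg (by nlinarith [sq_nonneg (s-θ)]) (by positivity)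
    _ = 1 := Real.exp_zero
  -- integrability
  have hone : Integrable (fun _ : ℝ => (1:ℝ)) P := integrable_const 1
  have iw : Integrable w P := by
    apply hone.mono' hwc.aestronglyMeasurable
    filter_upwards with θ
    rw [Real.norm_eq_abs, abs_of_pos (hwpos θ)]
    exact hwle θ
  have iwn : Integrable (fun θ => w (-θ)) P := by
    apply hone.mono' ((hwc.comp continuous_neg : Continuous fun θ : ℝ => w (-θ))).aestronglyMeasurable
    filter_upwards with θ
    show ‖w (-θ)‖ ≤ 1
    rw [Real.norm_eq_abs, abs_of_pos (hwpos (-θ))]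
    exact hwle (-θ)
  have iθ2w : Integrable (fun θ => θ^2 * w θ) P := by
    apply hint.mono' ((continuous_pow 2).mul hwc).aestronglyMeasurable
    filter_upwards with θ
    show ‖θ^2 * w θ‖ ≤ θ^2
    rw [Real.norm_eq_abs, abs_of_nonneg (by positivity : (0:ℝ) ≤ θ^2 * w θ)]
    nlinarith [hwle θ, hwpos θ, sq_nonneg θ]
  have iθ2wn : Integrable (fun θ => θ^2 * w (-θ)) P := by
    apply hint.mono' (((continuous_pow 2).mul (hwc.comp continuous_neg) :
      Continuous fun θ : ℝ => θ^2 * w (-θ))).aestronglyMeasurable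
    filter_upwards with θ
    show ‖θ^2 * w (-θ)‖ ≤ θ^2
    rw [Real.norm_eq_abs, abs_of_nonneg (by positivity : (0:ℝ) ≤ θ^2 * w (-θ))]
    nlinarith [hwle (-θ), hwpos (-θ), sq_nonneg θ]
  have iθw : Integrable (fun θ => θ * w θ) P := by
    apply (hone.add hint).mono' (continuous_id.mul hwc).aestronglyMeasurable
    filter_upwards with θ
    show ‖θ * w θ‖ ≤ 1 + θ^2
    rw [Real.norm_eq_abs, abs_mul, abs_of_pos (hwpos θ)]
    have h1 : |θ| * w θ ≤ |θ| * 1 := mul_le_mul_of_nonneg_left (hwle θ) (abs_nonneg θ)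
    have h2 : |θ| ≤ 1 + θ^2 := by nlinarith [sq_nonneg (|θ| - 1), sq_abs θ]
    nlinarith [h1, h2]
  -- symmetry
  have hsymInt : ∀ (f : ℝ → ℝ), Continuous f → (∫ θ, f (-θ) ∂P) = ∫ θ, f θ ∂P := by
    intro f hf
    conv_rhs => rw [← hsym]
    rw [integral_map measurable_neg.aemeasurable]
    · exact hf.aestronglyMeasurable
  set D := ∫ θ, w θ ∂P with hD
  set N := ∫ θ, θ * w θ ∂P with hN
  set J := ∫ θ, θ^2 * w θ ∂P with hJ
  have hDpos : 0 < D := by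
    rw [hD]
    rw [integral_pos_iff_support_of_nonneg (fun θ => (hwpos θ).le) iw]
    have : Function.support w = Set.univ := by
      ext θ; simp [Function.mem_support, ne_of_gt (hwpos θ)]
    rw [this]
    simp
  -- Cauchy-Schwarz : N^2 ≤ J * D
  have hCS : N^2 ≤ J * D := by
    set k := N / D with hk
    have hnn : 0 ≤ ∫ θ, (θ - k)^2 * w θ ∂P :=
      integral_nonneg (fun θ => mul_nonneg (sq_nonneg _) (hwpos θ).le)
    have hfun : (fun θ => (θ - k)^2 * w θ) =
        fun θ => (θ^2 * w θ - (2*k) * (θ * w θ)) + k^2 * w θ := by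
      funext θ; ring
    rw [hfun] at hnn
    have i1 : Integrable (fun θ => 2*k*(θ * w θ)) P := iθw.const_mul (2*k)
    have i2 : Integrable (fun θ => θ^2 * w θ - 2*k*(θ * w θ)) P := iθ2w.sub i1
    have i3 : Integrable (fun θ => k^2 * w θ) P := iw.const_mul (k^2)
    rw [integral_add i2 i3, integral_sub iθ2w i1, integral_const_mul, integral_const_mul] at hnn
    rw [hk] at hnn
    have h0 : 0 ≤ J - N^2/D := by
      have e : J - 2 * (N/D) * N + (N/D)^2 * D = J - N^2/D := by
        field_simp
        ring
      linarith [hnn, e.symm.le, e.le]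
    have := mul_le_mul_of_nonneg_right (by linarith : N^2/D ≤ J) hDpos.le
    calc N^2 = N^2/D * D := by field_simp
    _ ≤ J * D := this
  -- main step: pointwise Lagrangian inequality ⇒ second moment bound
  have step : ∀ c lam : ℝ, (∀ θ, (θ^2 - c) * (w θ + w (-θ)) ≤ lam * (θ^2 - v^2)) →
      J ≤ c * D := by
    intro c lam hpt
    have hL : Integrable (fun θ => (θ^2 - c) * (w θ + w (-θ))) P := by
      have : (fun θ => (θ^2 - c) * (w θ + w (-θ))) =
          fun θ => ((θ^2 * w θ + θ^2 * w (-θ)) - (c * w θ + c * w (-θ))) := by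
        funext θ; ring
      rw [this]
      exact ((iθ2w.add iθ2wn).sub ((iw.const_mul c).add (iwn.const_mul c)) :
        Integrable (fun θ => (θ^2 * w θ + θ^2 * w (-θ)) - (c * w θ + c * w (-θ))) P)
    have hR : Integrable (fun θ => lam * (θ^2 - v^2)) P :=
      ((hint.sub (integrable_const (v^2))).const_mul lam)
    have hle := integral_mono hL hR hpt
    have hRval : (∫ θ, lam * (θ^2 - v^2) ∂P) = 0 := by
      rw [integral_const_mul, integral_sub hint (integrable_const _), hvar, integral_const]
      simp
    have hLval : (∫ θ, (θ^2 - c) * (w θ + w (-θ)) ∂P) = 2*J - 2*c*D := by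
      have e1 : (fun θ => (θ^2 - c) * (w θ + w (-θ))) =
          fun θ => ((θ^2 * w θ + θ^2 * w (-θ)) - (c * w θ + c * w (-θ))) := by
        funext θ; ring
      have j1 : Integrable (fun θ => θ^2 * w θ + θ^2 * w (-θ)) P := iθ2w.add iθ2wn
      have j2 : Integrable (fun θ => c * w θ + c * w (-θ)) P :=
        (iw.const_mul c).add (iwn.const_mul c)
      rw [e1, integral_sub j1 j2, integral_add iθ2w iθ2wn,
          integral_add (iw.const_mul c) (iwn.const_mul c),
          integral_const_mul, integral_const_mul]
      have s1 : (∫ θ, θ^2 * w (-θ) ∂P) = J := by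
        rw [hJ]
        have := hsymInt (fun θ => θ^2 * w θ) ((continuous_pow 2).mul hwc)
        simpa using this
      have s2 : (∫ θ, w (-θ) ∂P) = D := by
        rw [hD]
        exact hsymInt w hwc
      rw [s1, s2]
      ring
    rw [hRval, hLval] at hle
    linarith
  -- conclude from second-moment bound
  have final : ∀ K : ℝ, 0 ≤ K → J ≤ K^2 * D → |N / D| ≤ K := by
    intro K hK hJK
    have hN2 : N^2 ≤ (K*D)^2 := by
      calc N^2 ≤ J * D := hCS
      _ ≤ K^2 * D * D := mul_le_mul_of_nonneg_right hJK hDpos.le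
      _ = (K*D)^2 := by ring
    have hNabs : |N| ≤ K * D := by
      have h1 : |N| = Real.sqrt (N^2) := (Real.sqrt_sq_eq_abs N).symm
      have h2 : Real.sqrt (N^2) ≤ Real.sqrt ((K*D)^2) := Real.sqrt_le_sqrt hN2
      rw [Real.sqrt_sq (by positivity : 0 ≤ K*D)] at h2
      linarith [h1 ▸ h2]
    rw [abs_div, abs_of_pos hDpos, div_le_iff₀ hDpos]
    exact hNabs
  -- identity : w θ + w (-θ) = 2 c₀ ρ(θ/σ)
  set z : ℝ := |s|/σ with hz
  set c₀ : ℝ := Real.exp (-s^2/(2*σ^2)) with hc₀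
  have hc₀pos : 0 < c₀ := Real.exp_pos _
  have hident : ∀ θ : ℝ, w θ + w (-θ) = 2*c₀*rhoAux z (θ/σ) := by
    intro θ
    have h1 : w θ = c₀ * Real.exp (-(θ/σ)^2/2) * Real.exp (s*θ/σ^2) := by
      rw [hw, hc₀]
      show Real.exp (-(s - θ) ^ 2 / (2 * σ ^ 2)) = _
      rw [← Real.exp_add, ← Real.exp_add]
      congr 1
      field_simp
      ring
    have h2 : w (-θ) = c₀ * Real.exp (-(θ/σ)^2/2) * Real.exp (-(s*θ/σ^2)) := by
      rw [hw, hc₀]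
      show Real.exp (-(s - (-θ)) ^ 2 / (2 * σ ^ 2)) = _
      rw [← Real.exp_add, ← Real.exp_add]
      congr 1
      field_simp
      ring
    have h3 : rhoAux z (θ/σ) = Real.exp (-(θ/σ)^2/2) * Real.cosh (s*θ/σ^2) := by
      rcases abs_cases s with ⟨hs,_⟩ | ⟨hs,_⟩
      · rw [rhoAux, hz, hs, show (s/σ)*(θ/σ) = s*θ/σ^2 by rw [div_mul_div_comm, ← sq]]
      · rw [rhoAux, hz, hs, show (-s/σ)*(θ/σ) = -(s*θ/σ^2) by rw [div_mul_div_comm, ← sq, neg_mul, neg_div], Real.cosh_neg]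
    rw [h1, h2, h3, Real.cosh_eq]
    ring
  constructor
  · -- bound 1
    set K := max v (2*|s|) with hK
    apply final _ (le_trans hv0 (le_max_left _ _))
    apply step _ (2*c₀*rhoAux z (K/σ))
    intro θ
    have hkT := keyTσ (s := s) hσ hv0 (le_max_right v (2*|s|)) (le_max_left v (2*|s|)) θ
    rw [hident θ]
    calc (θ^2 - K^2) * (2*c₀*rhoAux z (θ/σ))
        = 2*c₀*((θ^2 - K^2) * rhoAux z (θ/σ)) := by ring
    _ ≤ 2*c₀*(rhoAux z (K/σ) * (θ^2 - v^2)) := by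
        apply mul_le_mul_of_nonneg_left _ (by positivity)
        exact hkT
    _ = 2*c₀*rhoAux z (K/σ) * (θ^2 - v^2) := by ring
  · -- bound 2
    set B := v * Real.exp (s^2/(4*σ^2)) with hB
    have hBsq : B^2 = Real.exp (s^2/(2*σ^2)) * v^2 := by
      have he : Real.exp (s^2/(4*σ^2))^2 = Real.exp (s^2/(2*σ^2)) := by
        rw [sq, ← Real.exp_add]
        congr 1
        field_simp
        ring
      rw [hB, mul_pow, he]
      ring
    apply final _ (by positivity)
    rw [hBsq]
    apply step _ (2*c₀*(Real.exp (s^2/(2*σ^2)) * min 1 (rhoAux z (v/σ))))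
    intro θ
    have hkF := keyFσ (s := s) (v := v) hσ hv0 θ
    rw [hident θ]
    calc (θ^2 - Real.exp (s^2/(2*σ^2))*v^2) * (2*c₀*rhoAux z (θ/σ))
        = 2*c₀*((θ^2 - Real.exp (s^2/(2*σ^2))*v^2) * rhoAux z (θ/σ)) := by ring
    _ ≤ 2*c₀*(Real.exp (s^2/(2*σ^2)) * min 1 (rhoAux z (v/σ)) * (θ^2 - v^2)) := by
        apply mul_le_mul_of_nonneg_left _ (by positivity)
        exact hkF
    _ = 2*c₀*(Real.exp (s^2/(2*σ^2)) * min 1 (rhoAux z (v/σ))) * (θ^2 - v^2) := by ring
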